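/- Let T be a contraction on H of the form T = F₁ + S_k(I−P_n) with F₁(I−P_n) = 0 and (I−P_{n+k})F₁ = 0. Then T is hyponormal if and only if ‖F₁*x‖² − ‖F₁x‖² ≤ ‖P_{n+k}x‖² − ‖P_n x‖² for all x ∈ H. -/

import Mathlib

set_option maxHeartbeats 1000000

open ContinuousLinearMap

local notation "⟪" x ", " y "⟫" => @inner ℂ _ _ x y

private lemma vec_ext' {H : Type*} [NormedAddCommGroup H] [InnerProductSpace ℂ H]
    (e : HilbertBasis ℕ ℂ H) {x y : H} (h : ∀ i, ⟪e i, x⟫ = ⟪e i, y⟫) : x = y := by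
  apply e.repr.injective
  ext i
  simpa [e.repr_apply_apply] using h i

private lemma op_ext' {H : Type*} [NormedAddCommGroup H] [InnerProductSpace ℂ H]
    (e : HilbertBasis ℕ ℂ H) {A B : H →L[ℂ] H} (h : ∀ i, A (e i) = B (e i)) : A = B := by
  refine ContinuousLinearMap.ext_on
    (Submodule.dense_iff_topologicalClosure_eq_top.mpr e.dense_span) ?_
  rintro x ⟨i, rfl⟩
  exact h i

/-- A contraction `T = F₁ + S_k (I - P_n)` (with `F₁ (I - P_n) = 0`, `(I - P_{n+k}) F₁ = 0`)
is hyponormal iff `‖F₁* x‖² - ‖F₁ x‖² ≤ ‖P_{n+k} x‖² - ‖P_n x‖²` for all `x`. -/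
theorem hyponormal_iff_F1_inequality
    {H : Type*} [NormedAddCommGroup H] [InnerProductSpace ℂ H] [CompleteSpace H]
    (e : HilbertBasis ℕ ℂ H) (n k : ℕ) (hk : 1 ≤ k)
    (Sk Pn Pnk F₁ T : H →L[ℂ] H)
    (hSk : ∀ m : ℕ, Sk (e m) = e (m + k))
    (hPn : ∀ m : ℕ, Pn (e m) = if m < n then e m else 0)
    (hPnk : ∀ m : ℕ, Pnk (e m) = if m < n + k then e m else 0)
    (hF1 : F₁ * (1 - Pn) = 0) (hF2 : (1 - Pnk) * F₁ = 0)
    (hT : T = F₁ + Sk * (1 - Pn)) (hcontr : ‖T‖ ≤ 1) :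
    (adjoint T * T - T * adjoint T).IsPositive ↔
      ∀ x : H, ‖adjoint F₁ x‖ ^ 2 - ‖F₁ x‖ ^ 2 ≤ ‖Pnk x‖ ^ 2 - ‖Pn x‖ ^ 2 := by
  have hee : ∀ i j : ℕ, ⟪e i, e j⟫ = if i = j then (1:ℂ) else 0 :=
    orthonormal_iff_ite.mp e.orthonormal
  -- adjoint of Sk on basis vectors
  have haSk : ∀ m : ℕ, adjoint Sk (e m) = if k ≤ m then e (m - k) else 0 := by
    intro m
    apply vec_ext' e
    intro j
    rw [adjoint_inner_right, hSk, hee]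
    by_cases h1 : k ≤ m
    · rw [if_pos h1, hee]
      split_ifs with a b b <;> first | rfl | omega
    · rw [if_neg h1, inner_zero_right]
      split_ifs with a
      · omega
      · rfl
  -- Pn, Pnk are self-adjoint idempotents
  have hPnsa : adjoint Pn = Pn := by
    apply op_ext' e
    intro i
    apply vec_ext' e
    intro j
    rw [adjoint_inner_right, hPn, hPn]
    split_ifs with h1 h2 h2 <;>
      simp only [inner_zero_right, inner_zero_left, hee] <;> split_ifs <;>
        first | rfl | omega
  have hPnksa : adjoint Pnk = Pnk := by
    apply op_ext' e
    intro i
    apply vec_ext' e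
    intro j
    rw [adjoint_inner_right, hPnk, hPnk]
    split_ifs with h1 h2 h2 <;>
      simp only [inner_zero_right, inner_zero_left, hee] <;> split_ifs <;>
        first | rfl | omega
  have hPnidem : Pn * Pn = Pn := by
    apply op_ext' e
    intro i
    rw [mul_apply_eq_comp, hPn i]
    split_ifs with h1
    · rw [hPn, if_pos h1]
    · exact map_zero _
  have hPnkidem : Pnk * Pnk = Pnk := by
    apply op_ext' e
    intro i
    rw [mul_apply_eq_comp, hPnk i]
    split_ifs with h1
    · rw [hPnk, if_pos h1]
    · exact map_zero _
  -- Sk is an isometry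
  have hSS : adjoint Sk * Sk = 1 := by
    apply op_ext' e
    intro i
    rw [mul_apply_eq_comp, one_apply_eq_self, hSk, haSk, if_pos (by omega : k ≤ i + k)]
    congr 1
    omega
  -- intertwining relation
  have hQS : (1 - Pn) * adjoint Sk = adjoint Sk * (1 - Pnk) := by
    apply op_ext' e
    intro i
    simp only [mul_apply_eq_comp, sub_apply, one_apply_eq_self]
    rw [haSk, hPnk]
    by_cases h2 : i < n + k
    · rw [if_pos h2, sub_self, map_zero]
      by_cases h1 : k ≤ i
      · rw [if_pos h1, hPn, if_pos (by omega : i - k < n), sub_self]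
      · rw [if_neg h1, map_zero, sub_zero]
    · rw [if_neg h2, sub_zero, haSk, if_pos (by omega : k ≤ i),
        hPn, if_neg (by omega : ¬ i - k < n), sub_zero]
  have hSSR : Sk * (adjoint Sk * (1 - Pnk)) = 1 - Pnk := by
    apply op_ext' e
    intro i
    simp only [mul_apply_eq_comp, sub_apply, one_apply_eq_self]
    rw [hPnk]
    by_cases h2 : i < n + k
    · rw [if_pos h2, sub_self, map_zero, map_zero]
    · rw [if_neg h2, sub_zero, haSk, if_pos (by omega : k ≤ i), hSk]
      congr 1
      omega
  have hPkSQ : Pnk * (Sk * (1 - Pn)) = 0 := by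
    apply op_ext' e
    intro i
    simp only [mul_apply_eq_comp, sub_apply, one_apply_eq_self, zero_apply]
    rw [hPn]
    by_cases h1 : i < n
    · rw [if_pos h1, sub_self, map_zero, map_zero]
    · rw [if_neg h1, sub_zero, hSk, hPnk, if_neg (by omega : ¬ i + k < n + k)]
  -- F₁ = Pnk * F₁ and its adjoint version
  have hF2' : Pnk * F₁ = F₁ := by
    have := hF2
    rw [sub_mul, one_mul, sub_eq_zero] at this
    exact this.symm
  have haF : adjoint F₁ * Pnk = adjoint F₁ := by
    have : adjoint (Pnk * F₁) = adjoint F₁ := by rw [hF2']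
    rwa [← star_eq_adjoint (Pnk * F₁), star_mul, star_eq_adjoint, star_eq_adjoint,
      hPnksa] at this
  have hQsa : adjoint (1 - Pn) = 1 - Pn := by
    rw [← star_eq_adjoint, star_sub, star_one, star_eq_adjoint, hPnsa]
  -- adjoint of T
  have hadjT : adjoint T = adjoint F₁ + (1 - Pn) * adjoint Sk := by
    rw [hT, show adjoint (F₁ + Sk * (1 - Pn)) = star (F₁ + Sk * (1 - Pn)) from
      (star_eq_adjoint _).symm]
    simp only [star_add, star_mul, star_eq_adjoint, hQsa]
  have hQ2 : (1 - Pn) * (1 - Pn) = 1 - Pn := by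
    rw [sub_mul, one_mul, mul_sub, mul_one, hPnidem, sub_self, sub_zero]
  -- cross terms vanish
  have hc1 : adjoint F₁ * (Sk * (1 - Pn)) = 0 := by
    rw [← haF, mul_assoc, hPkSQ, mul_zero]
  have hc2 : (1 - Pn) * adjoint Sk * F₁ = 0 := by
    have := congrArg star hc1
    simp only [star_mul, star_zero, star_eq_adjoint, adjoint_adjoint, hQsa] at this
    exact this
  have hc3 : F₁ * ((1 - Pn) * adjoint Sk) = 0 := by
    rw [← mul_assoc, hF1, zero_mul]
  have hc4 : Sk * (1 - Pn) * adjoint F₁ = 0 := by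
    have := congrArg star hc3
    simp only [star_mul, star_zero, star_eq_adjoint, adjoint_adjoint, hQsa] at this
    exact this
  -- the two products
  have hTT : adjoint T * T = adjoint F₁ * F₁ + (1 - Pn) := by
    rw [hadjT, hT, add_mul, mul_add, mul_add, hc1, add_zero]
    have h4 : (1 - Pn) * adjoint Sk * (Sk * (1 - Pn)) = 1 - Pn := by
      rw [mul_assoc, ← mul_assoc (adjoint Sk), hSS, one_mul, hQ2]
    rw [hc2, h4, zero_add]
  have hTT' : T * adjoint T = F₁ * adjoint F₁ + (1 - Pnk) := by
    rw [hadjT, hT, add_mul, mul_add, mul_add, hc3, add_zero, hc4, zero_add]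
    have h4 : Sk * (1 - Pn) * ((1 - Pn) * adjoint Sk) = 1 - Pnk := by
      rw [mul_assoc, ← mul_assoc (1 - Pn), hQ2, hQS, hSSR]
    rw [h4]
  have hD : adjoint T * T - T * adjoint T
      = adjoint F₁ * F₁ - F₁ * adjoint F₁ + (Pnk - Pn) := by
    rw [hTT, hTT']
    abel
  -- the quadratic form
  have hproj : ∀ x : H, RCLike.re ⟪Pn x, x⟫ = ‖Pn x‖ ^ 2 := by
    intro x
    have hx : Pn (Pn x) = Pn x := by
      have := DFunLike.congr_fun hPnidem x
      rwa [mul_apply_eq_comp] at this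
    have : ⟪Pn x, x⟫ = ⟪Pn x, Pn x⟫ := by
      nth_rewrite 1 [← hx]
      nth_rewrite 1 [← hPnsa]
      exact adjoint_inner_left Pn x (Pn x)
    rw [this, inner_self_eq_norm_sq]
  have hprojk : ∀ x : H, RCLike.re ⟪Pnk x, x⟫ = ‖Pnk x‖ ^ 2 := by
    intro x
    have hx : Pnk (Pnk x) = Pnk x := by
      have := DFunLike.congr_fun hPnkidem x
      rwa [mul_apply_eq_comp] at this
    have : ⟪Pnk x, x⟫ = ⟪Pnk x, Pnk x⟫ := by
      nth_rewrite 1 [← hx]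
      nth_rewrite 1 [← hPnksa]
      exact adjoint_inner_left Pnk x (Pnk x)
    rw [this, inner_self_eq_norm_sq]
  have hform : ∀ x : H, (adjoint T * T - T * adjoint T).reApplyInnerSelf x
      = ‖F₁ x‖ ^ 2 - ‖adjoint F₁ x‖ ^ 2 + (‖Pnk x‖ ^ 2 - ‖Pn x‖ ^ 2) := by
    intro x
    rw [reApplyInnerSelf_apply, hD]
    simp only [add_apply, sub_apply, mul_apply_eq_comp]
    rw [inner_add_left, inner_sub_left, inner_sub_left, map_add, map_sub, map_sub]
    have h1 : ⟪adjoint F₁ (F₁ x), x⟫ = ⟪F₁ x, F₁ x⟫ := adjoint_inner_left F₁ x (F₁ x)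
    have h2 : ⟪F₁ (adjoint F₁ x), x⟫ = ⟪adjoint F₁ x, adjoint F₁ x⟫ := by
      nth_rewrite 1 [← adjoint_adjoint F₁]
      exact adjoint_inner_left (adjoint F₁) x (adjoint F₁ x)
    rw [h1, h2, inner_self_eq_norm_sq, inner_self_eq_norm_sq, hproj, hprojk]
  -- conclude
  constructor
  · intro hpos x
    have := hpos.2 x
    rw [hform x] at this
    linarith
  · intro h
    constructor
    · have h1 : IsSelfAdjoint (adjoint T * T) := by
        have := IsSelfAdjoint.star_mul_self T
        rwa [star_eq_adjoint] at this
      have h2 : IsSelfAdjoint (T * adjoint T) := by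
        have := IsSelfAdjoint.mul_star_self T
        rwa [star_eq_adjoint] at this
      exact (h1.sub h2).isSymmetric
    · intro x
      rw [hform x]
      have := h x
      linarith
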